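/- Let 𝔗 be a hierarchical clustering method satisfying conditions (II) and (III). Then for every finite metric space (X,d), the output ultrametric satisfies u(x,x') ≥ u_SL(x,x') for all x,x' ∈ X. -/

import Mathlib

/-- `d` is a metric on `X`. -/
def IsMetric {X : Type} (d : X → X → ℝ) : Prop :=
  (∀ x y, 0 ≤ d x y) ∧ (∀ x y, d x y = 0 ↔ x = y) ∧
  (∀ x y, d x y = d y x) ∧ (∀ x y z, d x z ≤ d x y + d y z)

/-- `d` is an ultrametric on `X`. -/
def IsUltrametric {X : Type} (d : X → X → ℝ) : Prop :=
  IsMetric d ∧ ∀ x y z, d x z ≤ max (d x y) (d y z)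

/-- There is an `r`-chain from `x` to `y`: a finite chain of points each consecutive
pair at distance at most `r`. -/
def HasChain {X : Type} (d : X → X → ℝ) (r : ℝ) (x y : X) : Prop :=
  Relation.ReflTransGen (fun a b => d a b ≤ r) x y

/-- The single linkage ultrametric: the minimal `r ≥ 0` such that there is an `r`-chain
from `x` to `y` (equivalently, the min over chains of the max step). -/
noncomputable def uSL {X : Type} (d : X → X → ℝ) (x y : X) : ℝ :=
  sInf { r : ℝ | 0 ≤ r ∧ HasChain d r x y }

/-- The separation of a metric space: the minimal distance between distinct points. -/
noncomputable def sep {X : Type} (d : X → X → ℝ) : ℝ :=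
  sInf { r : ℝ | ∃ x y, x ≠ y ∧ r = d x y }

/-- A correspondence between `A` and `B`. -/
def IsCorrespondence {A B : Type} (R : Set (A × B)) : Prop :=
  (∀ a, ∃ b, (a, b) ∈ R) ∧ (∀ b, ∃ a, (a, b) ∈ R)

/-- The distortion of a correspondence. -/
noncomputable def distortion {A B : Type} (dA : A → A → ℝ) (dB : B → B → ℝ)
    (R : Set (A × B)) : ℝ :=
  sSup { v : ℝ | ∃ p ∈ R, ∃ q ∈ R, v = |dA p.1 q.1 - dB p.2 q.2| }

/-- The Gromov–Hausdorff distance: half the infimum over correspondences of the distortion. -/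
noncomputable def ghDist {A B : Type} (dA : A → A → ℝ) (dB : B → B → ℝ) : ℝ :=
  (1 / 2) * sInf { v : ℝ | ∃ R : Set (A × B), IsCorrespondence R ∧ v = distortion dA dB R }


/-- Auxiliary: the scaled discrete metric. -/
noncomputable def discMetric {Q : Type} [DecidableEq Q] (η : ℝ) : Q → Q → ℝ :=
  fun P R => if P = R then 0 else η

lemma discMetric_isMetric {Q : Type} [DecidableEq Q] {η : ℝ} (hη : 0 < η) :
    IsMetric (discMetric (Q := Q) η) := by
  refine ⟨?_, ?_, ?_, ?_⟩
  · intro a b; unfold discMetric; split_ifs <;> linarith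
  · intro a b; unfold discMetric; split_ifs with h
    · simp [h]
    · constructor
      · intro h0; exact absurd h0 (ne_of_gt hη)
      · intro h0; exact absurd h0 h
  · intro a b; unfold discMetric
    split_ifs with h1 h2 h2 <;> first | rfl | (exact absurd h1.symm h2) | (exact absurd h2.symm h1)
  · intro a b c; unfold discMetric
    by_cases h1 : a = c <;> by_cases h2 : a = b <;> by_cases h3 : b = c <;>
      simp_all <;> linarith

lemma chain_max_bound {X : Type} {d : X → X → ℝ} (hd0 : ∀ a b, 0 ≤ d a b) {η : ℝ} {x y : X}
    (h : Relation.ReflTransGen (fun a b => d a b < η) x y) (hxy : x ≠ y) :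
    ∃ r, 0 ≤ r ∧ r < η ∧ HasChain d r x y := by
  induction h with
  | refl => exact absurd rfl hxy
  | @tail b c hxb hbc ih =>
    by_cases hx : x = b
    · subst hx
      exact ⟨d x c, hd0 _ _, hbc, Relation.ReflTransGen.single le_rfl⟩
    · obtain ⟨r, hr0, hrη, hch⟩ := ih hx
      refine ⟨max r (d b c), le_trans hr0 (le_max_left _ _), max_lt hrη hbc, ?_⟩
      refine Relation.ReflTransGen.tail ?_ (le_max_right _ _)
      exact Relation.ReflTransGen.mono (fun a b h => le_trans h (le_max_left _ _)) _ _ hch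

theorem ge_uSL_of_II_III
    (T : (X : Type) → [Fintype X] → (X → X → ℝ) → X → X → ℝ)
    (hHC : ∀ (X : Type) [Fintype X] (d : X → X → ℝ), IsMetric d → IsUltrametric (T X d))
    (hII : ∀ (X Y : Type) [Fintype X] [Fintype Y] (dX : X → X → ℝ) (dY : Y → Y → ℝ),
      IsMetric dX → IsMetric dY → ∀ φ : X → Y,
        (∀ x x', dY (φ x) (φ x') ≤ dX x x') →
        ∀ x x', T Y dY (φ x) (φ x') ≤ T X dX x x')
    (hIII : ∀ (X : Type) [Fintype X] (d : X → X → ℝ), IsMetric d → Nontrivial X →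
      ∀ x x', x ≠ x' → sep d ≤ T X d x x')
    (X : Type) [Fintype X] (d : X → X → ℝ) (hd : IsMetric d) :
    ∀ x x', uSL d x x' ≤ T X d x x' := by
  classical
  intro x x'
  have hT : IsMetric (T X d) := (hHC X d hd).1
  have hT0 : 0 ≤ T X d x x' := hT.1 x x'
  by_cases h0 : uSL d x x' ≤ 0
  · linarith
  push_neg at h0
  set η := uSL d x x' with hηdef
  have hbdd : BddBelow {r : ℝ | 0 ≤ r ∧ HasChain d r x x'} := ⟨0, fun r hr => hr.1⟩
  have hxx' : x ≠ x' := by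
    rintro rfl
    have : uSL d x x ≤ 0 := csInf_le hbdd ⟨le_refl 0, Relation.ReflTransGen.refl⟩
    linarith
  -- the quotient by chains with steps < η
  let s : Setoid X := ⟨fun a b => Relation.ReflTransGen (fun a b => d a b < η) a b,
    ⟨fun _ => Relation.ReflTransGen.refl,
     fun h => (@Relation.ReflTransGen.stdSymm _ _ ⟨fun a b hab => by
        rw [hd.2.2.1 b a]; exact hab⟩).symm _ _ h,
     fun h1 h2 => h1.trans h2⟩⟩
  let Q := Quotient s
  haveI : Fintype Q := Fintype.ofFinite Q
  let dQ : Q → Q → ℝ := discMetric η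
  have hdQ : IsMetric dQ := discMetric_isMetric h0
  let φ : X → Q := Quotient.mk s
  have hnonexp : ∀ a b, dQ (φ a) (φ b) ≤ d a b := by
    intro a b
    by_cases h : φ a = φ b
    · simp only [dQ, discMetric, if_pos h]
      exact hd.1 a b
    · simp only [dQ, discMetric, if_neg h]
      by_contra hlt
      push_neg at hlt
      exact h (Quotient.sound (Relation.ReflTransGen.single hlt))
  have hneq : φ x ≠ φ x' := by
    intro heq
    obtain ⟨r, hr0, hrη, hch⟩ := chain_max_bound hd.1 (Quotient.exact heq) hxx'
    have : η ≤ r := csInf_le hbdd ⟨hr0, hch⟩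
    linarith
  haveI : Nontrivial Q := ⟨φ x, φ x', hneq⟩
  have h1 : T Q dQ (φ x) (φ x') ≤ T X d x x' := hII X Q d dQ hd hdQ φ hnonexp x x'
  have h2 : sep dQ ≤ T Q dQ (φ x) (φ x') := hIII Q dQ hdQ this (φ x) (φ x') hneq
  have h3 : η ≤ sep dQ := by
    apply le_csInf
    · exact ⟨η, φ x, φ x', hneq, by simp only [dQ, discMetric, if_neg hneq]⟩
    · rintro r ⟨P, R, hPR, rfl⟩
      simp only [dQ, discMetric, if_neg hPR, le_refl]
  linarith
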